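/- arXiv:1803.01741 — 5 statements merged into one kernel-verified Lean document; each statement's English description precedes it below -/
import Mathlib

section
/- Define σ : ℤ → ℝ[X]² by σ₀ = (1, 1) and the two-sided recursion σ_{j+1} = ( X·σ_j¹ + (X−1)·σ_j², (X+1)·σ_j¹ + X·σ_j² ) for all j ∈ ℤ, where σ_j = (σ_j¹, σ_j²) (the recursion matrix [[X, X−1],[X+1, X]] has determinant 1, so it extends to negative indices; in particular σ_{−1} = (1, −1)). Then the family { σ_j : j ∈ ℤ } is a basis of ℝ[X]² as a real vector space: it is linearly independent over ℝ and its ℝ-linear span is all of ℝ[X]². -/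
open Polynomial

noncomputable def AB5 : ℕ → Polynomial ℝ × Polynomial ℝ
  | 0 => (1, 1)
  | n + 1 => (X * (AB5 n).1 + (X - 1) * (AB5 n).2, (X + 1) * (AB5 n).1 + X * (AB5 n).2)

lemma AB5_natDegree : ∀ n, (AB5 n).1.natDegree ≤ n ∧ (AB5 n).2.natDegree ≤ n := by
  intro n
  induction n with
  | zero => simp [AB5]
  | succ n ih =>
    obtain ⟨h1, h2⟩ := ih
    have hX : (X : Polynomial ℝ).natDegree ≤ 1 := natDegree_X_le
    have hXm : (X - 1 : Polynomial ℝ).natDegree ≤ 1 := by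
      simpa using (natDegree_X_sub_C (1:ℝ)).le
    have hXp : (X + 1 : Polynomial ℝ).natDegree ≤ 1 := by
      simpa using (natDegree_X_add_C (1:ℝ)).le
    constructor
    · refine (natDegree_add_le _ _).trans ?_
      refine max_le ((natDegree_mul_le).trans ?_) ((natDegree_mul_le).trans ?_)
      · omega
      · omega
    · refine (natDegree_add_le _ _).trans ?_
      refine max_le ((natDegree_mul_le).trans ?_) ((natDegree_mul_le).trans ?_)
      · omega
      · omega

lemma AB5_coeff : ∀ n, (AB5 n).1.coeff n = 2^n ∧ (AB5 n).2.coeff n = 2^n := by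
  intro n
  induction n with
  | zero => simp [AB5]
  | succ n ih =>
    obtain ⟨h1, h2⟩ := ih
    have hz1 : (AB5 n).1.coeff (n+1) = 0 :=
      coeff_eq_zero_of_natDegree_lt (lt_of_le_of_lt (AB5_natDegree n).1 (by omega))
    have hz2 : (AB5 n).2.coeff (n+1) = 0 :=
      coeff_eq_zero_of_natDegree_lt (lt_of_le_of_lt (AB5_natDegree n).2 (by omega))
    have hAB : AB5 (n+1) = (X * (AB5 n).1 + (X - 1) * (AB5 n).2, (X + 1) * (AB5 n).1 + X * (AB5 n).2) := rfl
    rw [hAB]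
    constructor
    · show (X * (AB5 n).1 + (X - 1) * (AB5 n).2).coeff (n+1) = (2^(n+1) : ℝ)
      rw [coeff_add, coeff_X_mul, sub_mul, coeff_sub, coeff_X_mul, one_mul, h1, h2, hz2]
      ring
    · show ((X + 1) * (AB5 n).1 + X * (AB5 n).2).coeff (n+1) = (2^(n+1) : ℝ)
      rw [coeff_add, add_mul, coeff_add, coeff_X_mul, one_mul, coeff_X_mul, h1, h2, hz1]
      ring

lemma AB5_coeff_zero (n N : ℕ) (h : n < N) :
    (AB5 n).1.coeff N = 0 ∧ (AB5 n).2.coeff N = 0 :=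
  ⟨coeff_eq_zero_of_natDegree_lt (lt_of_le_of_lt (AB5_natDegree n).1 h),
   coeff_eq_zero_of_natDegree_lt (lt_of_le_of_lt (AB5_natDegree n).2 h)⟩

section Sigma
variable (σ : ℤ → Polynomial ℝ × Polynomial ℝ)
    (h0 : σ 0 = (1, 1))
    (hrec : ∀ j : ℤ, σ (j + 1) =
      (X * (σ j).1 + (X - 1) * (σ j).2, (X + 1) * (σ j).1 + X * (σ j).2))

include hrec in
lemma sig_inv : ∀ j : ℤ, σ j =
    (X * (σ (j+1)).1 + (1 - X) * (σ (j+1)).2,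
     -(X + 1) * (σ (j+1)).1 + X * (σ (j+1)).2) := by
  intro j
  rw [hrec j]
  refine Prod.ext ?_ ?_ <;> simp only [] <;> ring

include h0 hrec in
lemma sig_nonneg : ∀ n : ℕ, σ (n : ℤ) = AB5 n := by
  intro n
  induction n with
  | zero => simpa [AB5] using h0
  | succ n ih =>
    have : ((n+1 : ℕ) : ℤ) = (n : ℤ) + 1 := by push_cast; ring
    rw [this, hrec, ih]
    rfl

include h0 hrec in
lemma sig_neg : ∀ n : ℕ, σ (-(n : ℤ) - 1) = ((AB5 n).1, -(AB5 n).2) := by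
  intro n
  induction n with
  | zero =>
    have := sig_inv σ hrec (-1)
    simp only [neg_add_cancel] at this
    rw [show (-((0:ℕ):ℤ) - 1) = -1 by norm_num, this, h0]
    refine Prod.ext ?_ ?_ <;> simp [AB5]
  | succ n ih =>
    have h := sig_inv σ hrec (-(n:ℤ) - 2)
    rw [show (-(n:ℤ) - 2 + 1) = -(n:ℤ) - 1 by ring, ih] at h
    rw [show (-((n:ℕ)+1 : ℕ) - 1 : ℤ) = -(n:ℤ) - 2 by push_cast; ring, h]
    have hAB : AB5 (n+1) = (X * (AB5 n).1 + (X - 1) * (AB5 n).2,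
        (X + 1) * (AB5 n).1 + X * (AB5 n).2) := rfl
    rw [hAB]
    refine Prod.ext ?_ ?_ <;> simp only [] <;> ring

end Sigma

def dIdx : ℤ → ℕ := fun i => if 0 ≤ i then i.toNat else (-i-1).toNat

lemma dIdx_cast (N : ℕ) : dIdx (N : ℤ) = N := by simp [dIdx]

lemma dIdx_neg (N : ℕ) : dIdx (-(N:ℤ)-1) = N := by
  have h : ¬ (0 ≤ -(N:ℤ)-1) := by omega
  simp only [dIdx, if_neg h]
  omega

lemma dIdx_eq (i : ℤ) (N : ℕ) (h : dIdx i = N) : i = (N:ℤ) ∨ i = -(N:ℤ)-1 := by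
  simp only [dIdx] at h
  split at h <;> omega

section Sigma2
variable (σ : ℤ → Polynomial ℝ × Polynomial ℝ)
    (h0 : σ 0 = (1, 1))
    (hrec : ∀ j : ℤ, σ (j + 1) =
      (X * (σ j).1 + (X - 1) * (σ j).2, (X + 1) * (σ j).1 + X * (σ j).2))

include h0 hrec in
lemma sig_val (i : ℤ) :
    ((σ i).1 = (AB5 (dIdx i)).1 ∧ (σ i).2 = (AB5 (dIdx i)).2 ∧ 0 ≤ i) ∨
    ((σ i).1 = (AB5 (dIdx i)).1 ∧ (σ i).2 = -(AB5 (dIdx i)).2 ∧ i < 0) := by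
  rcases le_or_gt 0 i with h | h
  · left
    lift i to ℕ using h
    rw [sig_nonneg σ h0 hrec i, dIdx_cast]
    exact ⟨rfl, rfl, by positivity⟩
  · right
    set n := (-i-1).toNat with hn
    have hi : i = -(n:ℤ)-1 := by omega
    rw [hi, sig_neg σ h0 hrec n, dIdx_neg]
    exact ⟨rfl, rfl, by omega⟩

include h0 hrec in
lemma sig_coeff_lt (i : ℤ) (N : ℕ) (h : dIdx i < N) :
    (σ i).1.coeff N = 0 ∧ (σ i).2.coeff N = 0 := by
  rcases sig_val σ h0 hrec i with ⟨h1, h2, _⟩ | ⟨h1, h2, _⟩ <;>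
    rw [h1, h2] <;>
    simp [(AB5_coeff_zero (dIdx i) N h).1, (AB5_coeff_zero (dIdx i) N h).2]

include h0 hrec in
lemma sig_coeff_top (i : ℤ) :
    ((σ i).1.coeff (dIdx i) = 2^(dIdx i) ∧ (σ i).2.coeff (dIdx i) = 2^(dIdx i) ∧ 0 ≤ i) ∨
    ((σ i).1.coeff (dIdx i) = 2^(dIdx i) ∧ (σ i).2.coeff (dIdx i) = -2^(dIdx i) ∧ i < 0) := by
  rcases sig_val σ h0 hrec i with ⟨h1, h2, h3⟩ | ⟨h1, h2, h3⟩
  · left; rw [h1, h2]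
    exact ⟨(AB5_coeff (dIdx i)).1, (AB5_coeff (dIdx i)).2, h3⟩
  · right; rw [h1, h2]
    exact ⟨(AB5_coeff (dIdx i)).1, by rw [coeff_neg, (AB5_coeff (dIdx i)).2], h3⟩

end Sigma2

section Span
variable (σ : ℤ → Polynomial ℝ × Polynomial ℝ)
    (h0 : σ 0 = (1, 1))
    (hrec : ∀ j : ℤ, σ (j + 1) =
      (X * (σ j).1 + (X - 1) * (σ j).2, (X + 1) * (σ j).1 + X * (σ j).2))

include h0 hrec in
lemma mem_A (n : ℕ) :
    ((AB5 n).1, (0:Polynomial ℝ)) ∈ Submodule.span ℝ (Set.range σ) := by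
  have h1 : σ (n:ℤ) ∈ Submodule.span ℝ (Set.range σ) :=
    Submodule.subset_span ⟨(n:ℤ), rfl⟩
  have h2 : σ (-(n:ℤ)-1) ∈ Submodule.span ℝ (Set.range σ) :=
    Submodule.subset_span ⟨-(n:ℤ)-1, rfl⟩
  have key : ((AB5 n).1, (0:Polynomial ℝ)) =
      (2⁻¹ : ℝ) • (σ (n:ℤ) + σ (-(n:ℤ)-1)) := by
    rw [sig_nonneg σ h0 hrec n, sig_neg σ h0 hrec n]
    refine Prod.ext ?_ ?_
    · show (AB5 n).1 = (2⁻¹ : ℝ) • ((AB5 n).1 + (AB5 n).1)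
      rw [smul_add]
      module
    · show (0:Polynomial ℝ) = (2⁻¹ : ℝ) • ((AB5 n).2 + -(AB5 n).2)
      simp
  rw [key]
  exact Submodule.smul_mem _ _ (Submodule.add_mem _ h1 h2)

include h0 hrec in
lemma mem_B (n : ℕ) :
    ((0:Polynomial ℝ), (AB5 n).2) ∈ Submodule.span ℝ (Set.range σ) := by
  have h1 : σ (n:ℤ) ∈ Submodule.span ℝ (Set.range σ) :=
    Submodule.subset_span ⟨(n:ℤ), rfl⟩
  have h2 : σ (-(n:ℤ)-1) ∈ Submodule.span ℝ (Set.range σ) :=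
    Submodule.subset_span ⟨-(n:ℤ)-1, rfl⟩
  have key : ((0:Polynomial ℝ), (AB5 n).2) =
      (2⁻¹ : ℝ) • (σ (n:ℤ) - σ (-(n:ℤ)-1)) := by
    rw [sig_nonneg σ h0 hrec n, sig_neg σ h0 hrec n]
    refine Prod.ext ?_ ?_
    · show (0:Polynomial ℝ) = (2⁻¹ : ℝ) • ((AB5 n).1 - (AB5 n).1)
      simp
    · show (AB5 n).2 = (2⁻¹ : ℝ) • ((AB5 n).2 - -(AB5 n).2)
      rw [sub_neg_eq_add, smul_add]
      module
  rw [key]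
  exact Submodule.smul_mem _ _ (Submodule.sub_mem _ h1 h2)

include h0 hrec in
lemma span_fst : ∀ N : ℕ, ∀ p : Polynomial ℝ, (∀ k, N ≤ k → p.coeff k = 0) →
    (p, (0:Polynomial ℝ)) ∈ Submodule.span ℝ (Set.range σ) := by
  intro N
  induction N with
  | zero =>
    intro p hp
    have : p = 0 := by
      ext k
      simpa using hp k (Nat.zero_le k)
    rw [this]
    exact Submodule.zero_mem _
  | succ N ih =>
    intro p hp
    set c : ℝ := p.coeff N / 2^N with hc
    set q : Polynomial ℝ := p - C c * (AB5 N).1 with hq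
    have hq' : ∀ k, N ≤ k → q.coeff k = 0 := by
      intro k hk
      rcases eq_or_lt_of_le hk with h | h
      · rw [hq, coeff_sub, coeff_C_mul, ← h, (AB5_coeff N).1, hc]
        field_simp
        ring
      · rw [hq, coeff_sub, coeff_C_mul, hp k h,
          (AB5_coeff_zero N k h).1]
        ring
    have hmem := ih q hq'
    have : (p, (0:Polynomial ℝ)) = (q, (0:Polynomial ℝ)) + c • ((AB5 N).1, (0:Polynomial ℝ)) := by
      refine Prod.ext ?_ ?_
      · show p = q + c • (AB5 N).1
        rw [hq, smul_eq_C_mul]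
        ring
      · show (0:Polynomial ℝ) = 0 + c • (0:Polynomial ℝ)
        simp
    rw [this]
    exact Submodule.add_mem _ hmem (Submodule.smul_mem _ _ (mem_A σ h0 hrec N))

include h0 hrec in
lemma span_snd : ∀ N : ℕ, ∀ p : Polynomial ℝ, (∀ k, N ≤ k → p.coeff k = 0) →
    ((0:Polynomial ℝ), p) ∈ Submodule.span ℝ (Set.range σ) := by
  intro N
  induction N with
  | zero =>
    intro p hp
    have : p = 0 := by
      ext k
      simpa using hp k (Nat.zero_le k)
    rw [this]
    exact Submodule.zero_mem _
  | succ N ih =>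
    intro p hp
    set c : ℝ := p.coeff N / 2^N with hc
    set q : Polynomial ℝ := p - C c * (AB5 N).2 with hq
    have hq' : ∀ k, N ≤ k → q.coeff k = 0 := by
      intro k hk
      rcases eq_or_lt_of_le hk with h | h
      · rw [hq, coeff_sub, coeff_C_mul, ← h, (AB5_coeff N).2, hc]
        field_simp
        ring
      · rw [hq, coeff_sub, coeff_C_mul, hp k h,
          (AB5_coeff_zero N k h).2]
        ring
    have hmem := ih q hq'
    have : ((0:Polynomial ℝ), p) = ((0:Polynomial ℝ), q) + c • ((0:Polynomial ℝ), (AB5 N).2) := by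
      refine Prod.ext ?_ ?_
      · show (0:Polynomial ℝ) = 0 + c • (0:Polynomial ℝ)
        simp
      · show p = q + c • (AB5 N).2
        rw [hq, smul_eq_C_mul]
        ring
    rw [this]
    exact Submodule.add_mem _ hmem (Submodule.smul_mem _ _ (mem_B σ h0 hrec N))

include h0 hrec in
lemma span_top : Submodule.span ℝ (Set.range σ) = ⊤ := by
  rw [Submodule.eq_top_iff']
  intro v
  have h1 : (v.1, (0:Polynomial ℝ)) ∈ Submodule.span ℝ (Set.range σ) :=
    span_fst σ h0 hrec (v.1.natDegree + 1) v.1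
      (fun k hk => coeff_eq_zero_of_natDegree_lt (by omega))
  have h2 : ((0:Polynomial ℝ), v.2) ∈ Submodule.span ℝ (Set.range σ) :=
    span_snd σ h0 hrec (v.2.natDegree + 1) v.2
      (fun k hk => coeff_eq_zero_of_natDegree_lt (by omega))
  have : v = (v.1, (0:Polynomial ℝ)) + ((0:Polynomial ℝ), v.2) := by
    refine Prod.ext ?_ ?_ <;> simp
  rw [this]
  exact Submodule.add_mem _ h1 h2

end Span

section LI
variable (σ : ℤ → Polynomial ℝ × Polynomial ℝ)
    (h0 : σ 0 = (1, 1))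
    (hrec : ∀ j : ℤ, σ (j + 1) =
      (X * (σ j).1 + (X - 1) * (σ j).2, (X + 1) * (σ j).1 + X * (σ j).2))

include h0 hrec in
lemma li_claim : ∀ N : ℕ, ∀ s : Finset ℤ, (∀ i ∈ s, dIdx i < N) →
    ∀ g : ℤ → ℝ, ∑ i ∈ s, g i • σ i = 0 → ∀ i ∈ s, g i = 0 := by
  intro N
  induction N with
  | zero => intro s hs g _ i hi; exact absurd (hs i hi) (by omega)
  | succ N ih =>
    intro s hs g hsum
    have h1 : ∑ i ∈ s, g i * (σ i).1.coeff N = 0 := by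
      have := congrArg (fun v : Polynomial ℝ × Polynomial ℝ => (v.1).coeff N) hsum
      simpa [Prod.fst_sum, finset_sum_coeff, coeff_smul, smul_eq_mul] using this
    have h2 : ∑ i ∈ s, g i * (σ i).2.coeff N = 0 := by
      have := congrArg (fun v : Polynomial ℝ × Polynomial ℝ => (v.2).coeff N) hsum
      simpa [Prod.snd_sum, finset_sum_coeff, coeff_smul, smul_eq_mul] using this
    have hplus : ∑ i ∈ s, g i * ((σ i).1.coeff N + (σ i).2.coeff N) = 0 := by
      simp only [mul_add, Finset.sum_add_distrib, h1, h2, add_zero]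
    have hminus : ∑ i ∈ s, g i * ((σ i).1.coeff N - (σ i).2.coeff N) = 0 := by
      simp only [mul_sub, Finset.sum_sub_distrib, h1, h2, sub_zero]
    -- off-diagonal vanishing
    have hgN : (N:ℤ) ∈ s → g (N:ℤ) = 0 := by
      intro hN
      have key : ∑ i ∈ s, g i * ((σ i).1.coeff N + (σ i).2.coeff N)
          = g (N:ℤ) * ((σ (N:ℤ)).1.coeff N + (σ (N:ℤ)).2.coeff N) := by
        refine Finset.sum_eq_single_of_mem _ hN ?_
        intro b hb hbne
        rcases lt_or_eq_of_le (Nat.lt_succ_iff.mp (hs b hb)) with h | h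
        · rw [(sig_coeff_lt σ h0 hrec b N h).1, (sig_coeff_lt σ h0 hrec b N h).2]
          ring
        · rcases dIdx_eq b N h with rfl | rfl
          · exact absurd rfl hbne
          · rcases sig_coeff_top σ h0 hrec (-(N:ℤ)-1) with ⟨_, _, hpos⟩ | ⟨ha, hb', _⟩
            · omega
            · rw [dIdx_neg] at ha hb'
              rw [ha, hb']
              ring
      rcases sig_coeff_top σ h0 hrec (N:ℤ) with ⟨ha, hb', _⟩ | ⟨_, _, hneg⟩
      · rw [dIdx_cast] at ha hb'
        rw [hplus, ha, hb'] at key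
        have h2N : (2:ℝ)^N + 2^N ≠ 0 := by positivity
        field_simp at key
        have hpos : (0:ℝ) < 2^N * (1+1) := by positivity
        rw [mul_assoc] at key
        exact (mul_eq_zero.mp key.symm).resolve_right hpos.ne'
      · omega
    have hgM : (-(N:ℤ)-1) ∈ s → g (-(N:ℤ)-1) = 0 := by
      intro hN
      have key : ∑ i ∈ s, g i * ((σ i).1.coeff N - (σ i).2.coeff N)
          = g (-(N:ℤ)-1) * ((σ (-(N:ℤ)-1)).1.coeff N - (σ (-(N:ℤ)-1)).2.coeff N) := by
        refine Finset.sum_eq_single_of_mem _ hN ?_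
        intro b hb hbne
        rcases lt_or_eq_of_le (Nat.lt_succ_iff.mp (hs b hb)) with h | h
        · rw [(sig_coeff_lt σ h0 hrec b N h).1, (sig_coeff_lt σ h0 hrec b N h).2]
          ring
        · rcases dIdx_eq b N h with rfl | rfl
          · rcases sig_coeff_top σ h0 hrec (N:ℤ) with ⟨ha, hb', _⟩ | ⟨_, _, hneg⟩
            · rw [dIdx_cast] at ha hb'
              rw [ha, hb']
              ring
            · omega
          · exact absurd rfl hbne
      rcases sig_coeff_top σ h0 hrec (-(N:ℤ)-1) with ⟨_, _, hpos⟩ | ⟨ha, hb', _⟩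
      · omega
      · rw [dIdx_neg] at ha hb'
        rw [hminus, ha, hb'] at key
        have h2N : (2:ℝ)^N - (-2^N) ≠ 0 := by
          have : (0:ℝ) < 2^N := by positivity
          intro hcon
          nlinarith
        have := key.symm
        rcases mul_eq_zero.mp this with h | h
        · exact h
        · exact absurd h h2N
    -- remove the two top indices
    set s' : Finset ℤ := (s.erase (N:ℤ)).erase (-(N:ℤ)-1) with hs'
    have hsub : s' ⊆ s := fun x hx =>
      Finset.mem_of_mem_erase (Finset.mem_of_mem_erase hx)
    have hmem' : ∀ x ∈ s, x ∉ s' → x = (N:ℤ) ∨ x = -(N:ℤ)-1 := by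
      intro x hx hnx
      by_contra hcon
      push_neg at hcon
      exact hnx (Finset.mem_erase.mpr ⟨hcon.2, Finset.mem_erase.mpr ⟨hcon.1, hx⟩⟩)
    have hsum' : ∑ i ∈ s', g i • σ i = 0 := by
      rw [← hsum]
      refine Finset.sum_subset hsub ?_
      intro x hx hnx
      rcases hmem' x hx hnx with rfl | rfl
      · rw [hgN hx, zero_smul]
      · rw [hgM hx, zero_smul]
    have hlt' : ∀ i ∈ s', dIdx i < N := by
      intro i hi
      have h1' := hs i (hsub hi)
      rcases lt_or_eq_of_le (Nat.lt_succ_iff.mp h1') with h | h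
      · exact h
      · exfalso
        rcases dIdx_eq i N h with rfl | rfl
        · exact (Finset.mem_erase.mp (Finset.mem_erase.mp hi).2).1 rfl
        · exact (Finset.mem_erase.mp hi).1 rfl
    have hzero' := ih s' hlt' g hsum'
    intro i hi
    by_cases hc : i ∈ s'
    · exact hzero' i hc
    · rcases hmem' i hi hc with rfl | rfl
      · exact hgN hi
      · exact hgM hi

end LI

theorem stmt5 (σ : ℤ → Polynomial ℝ × Polynomial ℝ)
    (h0 : σ 0 = (1, 1))
    (hrec : ∀ j : ℤ, σ (j + 1) =
      (X * (σ j).1 + (X - 1) * (σ j).2, (X + 1) * (σ j).1 + X * (σ j).2)) :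
    LinearIndependent ℝ σ ∧
      Submodule.span ℝ (Set.range σ) = (⊤ : Submodule ℝ (Polynomial ℝ × Polynomial ℝ)) := by
  constructor
  · rw [linearIndependent_iff']
    intro s g hsum i hi
    exact li_claim σ h0 hrec (s.sup dIdx + 1) s
      (fun j hj => Nat.lt_succ_of_le (Finset.le_sup hj)) g hsum i hi
  · exact span_top σ h0 hrec
end

section
/- Define σ : ℤ → ℝ[X]² by σ₀ = (1, 1) and σ_{j+1} = ( X·σ_j¹ + (X−1)·σ_j², (X+1)·σ_j¹ + X·σ_j² ) for all j ∈ ℤ. Then for every integer k ≥ 1, both coordinates of σ_k − ( (2X)^k, (2X)^k ) are polynomials of degree strictly less than k, and both coordinates of σ_{−k−1} − ( (2X)^k, −(2X)^k ) are polynomials of degree strictly less than k. -/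
open Polynomial

private lemma mulLt {u p : Polynomial ℝ} {n : ℕ} (hu : u.degree ≤ 1) (hp : p.degree < n) :
    (u * p).degree < ((n + 1 : ℕ) : WithBot ℕ) := by
  refine lt_of_le_of_lt (degree_mul_le u p) ?_
  calc u.degree + p.degree ≤ 1 + p.degree := add_le_add hu le_rfl
    _ < 1 + (n : WithBot ℕ) := WithBot.add_lt_add_left (by simp) hp
    _ = ((n + 1 : ℕ) : WithBot ℕ) := by push_cast; exact add_comm _ _

private lemma degPow {n : ℕ} : ((2 * X : Polynomial ℝ) ^ n).degree = n := by
  rw [degree_pow]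
  have : (2 * X : Polynomial ℝ).degree = 1 := by compute_degree!
  rw [this]; simp

private lemma combo {p q : Polynomial ℝ} {n : ℕ} {u v : Polynomial ℝ} (hu : u.degree ≤ 1)
    (hv : v.degree ≤ 1) (hp : p.degree < n) (hq : q.degree < n) (ε : Polynomial ℝ)
    (hε : ε.degree < ((n + 1 : ℕ) : WithBot ℕ)) :
    (u * p + v * q + ε).degree < ((n + 1 : ℕ) : WithBot ℕ) := by
  refine lt_of_le_of_lt (degree_add_le _ _) (max_lt ?_ hε)
  exact lt_of_le_of_lt (degree_add_le _ _) (max_lt (mulLt hu hp) (mulLt hv hq))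

private lemma degXsub : (X - 1 : Polynomial ℝ).degree ≤ 1 := by compute_degree
private lemma degXadd : (X + 1 : Polynomial ℝ).degree ≤ 1 := by compute_degree
private lemma degXneg : (-(X - 1) : Polynomial ℝ).degree ≤ 1 := by
  rw [degree_neg]; exact degXsub
private lemma degXnadd : (-(X + 1) : Polynomial ℝ).degree ≤ 1 := by
  rw [degree_neg]; exact degXadd
private lemma degPowLt {n : ℕ} : ((2 * X : Polynomial ℝ) ^ n).degree < ((n+1:ℕ) : WithBot ℕ) := by
  rw [degPow]; exact_mod_cast Nat.lt_succ_self n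
private lemma degPowLt' {n : ℕ} : (-(2 * X : Polynomial ℝ) ^ n).degree < ((n+1:ℕ) : WithBot ℕ) := by
  rw [degree_neg]; exact degPowLt

theorem stmt6 (σ : ℤ → Polynomial ℝ × Polynomial ℝ)
    (h0 : σ 0 = (1, 1))
    (hrec : ∀ j : ℤ, σ (j + 1) =
      (X * (σ j).1 + (X - 1) * (σ j).2, (X + 1) * (σ j).1 + X * (σ j).2)) :
    ∀ k : ℕ, 1 ≤ k →
      ((σ (k : ℤ)).1 - (2 * X) ^ k).degree < (k : WithBot ℕ) ∧
      ((σ (k : ℤ)).2 - (2 * X) ^ k).degree < (k : WithBot ℕ) ∧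
      ((σ (-(k : ℤ) - 1)).1 - (2 * X) ^ k).degree < (k : WithBot ℕ) ∧
      ((σ (-(k : ℤ) - 1)).2 + (2 * X) ^ k).degree < (k : WithBot ℕ) := by
  have hinv : ∀ j : ℤ, (σ j).1 = X * (σ (j+1)).1 - (X-1) * (σ (j+1)).2 ∧
      (σ j).2 = -(X+1) * (σ (j+1)).1 + X * (σ (j+1)).2 := by
    intro j
    rw [hrec j]
    constructor <;> simp <;> ring
  intro k hk
  induction k with
  | zero => omega
  | succ n ih =>
    rcases Nat.lt_or_ge 1 (n+1) with h1 | h1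
    ·
      have hn : 1 ≤ n := by omega
      obtain ⟨ha, hb, hc, hd⟩ := ih hn
      have hcast : ((n + 1 : ℕ) : ℤ) = (n : ℤ) + 1 := by push_cast; ring
      have hidx : (-(((n:ℕ)+1 : ℕ) : ℤ) - 1) = (-(n:ℤ) - 2) := by push_cast; ring
      have hidx2 : (-(n:ℤ) - 2) + 1 = -(n:ℤ) - 1 := by ring
      obtain ⟨hi1, hi2⟩ := hinv (-(n:ℤ) - 2)
      rw [hidx2] at hi1 hi2
      refine ⟨?_, ?_, ?_, ?_⟩
      · have : (σ (((n+1:ℕ)) : ℤ)).1 - (2*X)^(n+1) =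
            X * ((σ (n:ℤ)).1 - (2*X)^n) + (X-1) * ((σ (n:ℤ)).2 - (2*X)^n) + (-(2*X)^n) := by
          rw [hcast, hrec (n:ℤ)]; ring
        rw [this]
        exact combo degree_X_le degXsub ha hb _ degPowLt'
      · have : (σ (((n+1:ℕ)) : ℤ)).2 - (2*X)^(n+1) =
            (X+1) * ((σ (n:ℤ)).1 - (2*X)^n) + X * ((σ (n:ℤ)).2 - (2*X)^n) + ((2*X)^n) := by
          rw [hcast, hrec (n:ℤ)]; ring
        rw [this]
        exact combo degXadd degree_X_le ha hb _ degPowLt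
      · have : (σ (-(((n+1:ℕ)) : ℤ) - 1)).1 - (2*X)^(n+1) =
            X * ((σ (-(n:ℤ)-1)).1 - (2*X)^n) + (-(X-1)) * ((σ (-(n:ℤ)-1)).2 + (2*X)^n)
              + (-(2*X)^n) := by
          rw [hidx, hi1]; ring
        rw [this]
        exact combo degree_X_le degXneg hc hd _ degPowLt'
      · have : (σ (-(((n+1:ℕ)) : ℤ) - 1)).2 + (2*X)^(n+1) =
            (-(X+1)) * ((σ (-(n:ℤ)-1)).1 - (2*X)^n) + X * ((σ (-(n:ℤ)-1)).2 + (2*X)^n)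
              + (-(2*X)^n) := by
          rw [hidx, hi2]; ring
        rw [this]
        exact combo degXnadd degree_X_le hc hd _ degPowLt'
    · -- n + 1 = 1
      have hn0 : n = 0 := by omega
      subst hn0
      obtain ⟨hm1a, hm1b⟩ := hinv (-1)
      simp only [show (-1 : ℤ) + 1 = 0 from by ring, h0] at hm1a hm1b
      obtain ⟨hm2a, hm2b⟩ := hinv (-2)
      simp only [show (-2 : ℤ) + 1 = -1 from by ring] at hm2a hm2b
      have e1 : σ (1 : ℤ) = σ ((0:ℤ) + 1) := by norm_num
      have key1 : (σ ((0:ℕ)+1 : ℕ) : Polynomial ℝ × Polynomial ℝ).1 - (2*X)^((0:ℕ)+1) = -1 := by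
        push_cast
        rw [e1, hrec 0, h0]; ring
      have key2 : (σ ((0:ℕ)+1 : ℕ) : Polynomial ℝ × Polynomial ℝ).2 - (2*X)^((0:ℕ)+1) = 1 := by
        push_cast
        rw [e1, hrec 0, h0]; ring
      have key3 : (σ (-(((0:ℕ)+1 : ℕ)) - 1 : ℤ)).1 - (2*X)^((0:ℕ)+1) = -1 := by
        push_cast
        rw [hm2a, hm1a, hm1b]; ring
      have key4 : (σ (-(((0:ℕ)+1 : ℕ)) - 1 : ℤ)).2 + (2*X)^((0:ℕ)+1) = -1 := by
        push_cast
        rw [hm2b, hm1a, hm1b]; ring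
      refine ⟨?_, ?_, ?_, ?_⟩ <;>
        [rw [key1]; rw [key2]; rw [key3]; rw [key4]] <;>
        · refine lt_of_le_of_lt ?_ (by exact_mod_cast (WithBot.coe_lt_coe.mpr Nat.zero_lt_one) : (0 : WithBot ℕ) < ((0:ℕ)+1 : ℕ))
          first
            | (rw [degree_neg]; exact degree_one.le)
            | exact degree_one.le
end

section
/- Define v : ℤ → ℝ[X]² by v₀ = (0, 0) and the two-sided affine recursion v_{n+1} = ( X·v_n¹ + (X−1)·v_n² + 1, (X+1)·v_n¹ + X·v_n² + 1 ) (the linear part has determinant 1, so the recursion extends to negative indices). Then for every t ∈ (0, π) and every n ∈ ℤ, evaluating the coordinate polynomials at X = cos t gives v_n(cos t) = ( sin(n t) / sin t, (cos(n t) − 1)/(cos t − 1) ). -/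
open Polynomial Real

theorem stmt8 (v : ℤ → Polynomial ℝ × Polynomial ℝ)
    (h0 : v 0 = (0, 0))
    (hrec : ∀ n : ℤ, v (n + 1) =
      (X * (v n).1 + (X - 1) * (v n).2 + 1, (X + 1) * (v n).1 + X * (v n).2 + 1)) :
    ∀ t ∈ Set.Ioo (0 : ℝ) π, ∀ n : ℤ,
      (v n).1.eval (Real.cos t) = Real.sin ((n : ℝ) * t) / Real.sin t ∧
      (v n).2.eval (Real.cos t) = (Real.cos ((n : ℝ) * t) - 1) / (Real.cos t - 1) := by
  rintro t ⟨ht0, htπ⟩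
  have hspos : 0 < Real.sin t := Real.sin_pos_of_pos_of_lt_pi ht0 htπ
  have hs : Real.sin t ≠ 0 := ne_of_gt hspos
  have hpyth := Real.sin_sq_add_cos_sq t
  have hc : Real.cos t - 1 ≠ 0 := by nlinarith [hpyth, hspos]
  have step : ∀ x : ℝ,
      Real.sin ((x + 1) * t) / Real.sin t
        = Real.cos t * (Real.sin (x * t) / Real.sin t)
          + (Real.cos t - 1) * ((Real.cos (x * t) - 1) / (Real.cos t - 1)) + 1 ∧
      (Real.cos ((x + 1) * t) - 1) / (Real.cos t - 1)
        = (Real.cos t + 1) * (Real.sin (x * t) / Real.sin t)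
          + Real.cos t * ((Real.cos (x * t) - 1) / (Real.cos t - 1)) + 1 := by
    intro x
    have hx : (x + 1) * t = x * t + t := by ring
    rw [hx, Real.sin_add, Real.cos_add]
    constructor
    · field_simp
      ring
    · field_simp
      linear_combination (-Real.sin (x * t)) * hpyth
  intro n
  induction n using Int.induction_on with
  | zero => simp [h0]
  | succ n ih =>
    have h := hrec n
    have push : ((n : ℤ) + 1 : ℤ) = (n : ℤ) + 1 := rfl
    rw [h]
    simp only [Polynomial.eval_add, Polynomial.eval_mul, Polynomial.eval_X,
      Polynomial.eval_one, Polynomial.eval_sub]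
    rw [ih.1, ih.2]
    have hst := step (n : ℝ)
    constructor
    all_goals rw [show (((n : ℤ) + 1 : ℤ) : ℝ) = (n : ℝ) + 1 from by push_cast; ring]
    · exact hst.1.symm
    · exact hst.2.symm
  | pred n ih =>
    have h := hrec (-(n : ℤ) - 1)
    rw [show (-(n : ℤ) - 1 + 1 : ℤ) = -(n : ℤ) by ring] at h
    have e1 : (v (-(n : ℤ))).1.eval (Real.cos t)
        = Real.cos t * (v (-(n : ℤ) - 1)).1.eval (Real.cos t)
          + (Real.cos t - 1) * (v (-(n : ℤ) - 1)).2.eval (Real.cos t) + 1 := by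
      rw [h]; simp [Polynomial.eval_add, Polynomial.eval_mul]
    have e2 : (v (-(n : ℤ))).2.eval (Real.cos t)
        = (Real.cos t + 1) * (v (-(n : ℤ) - 1)).1.eval (Real.cos t)
          + Real.cos t * (v (-(n : ℤ) - 1)).2.eval (Real.cos t) + 1 := by
      rw [h]; simp [Polynomial.eval_add, Polynomial.eval_mul]
    rw [ih.1] at e1
    rw [ih.2] at e2
    have hst := step ((-(n : ℝ)) - 1)
    rw [show ((-(n : ℝ)) - 1 + 1) = ((-(n : ℤ) : ℤ) : ℝ) by push_cast; ring] at hst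
    have F1 := hst.1
    have F2 := hst.2
    have hcast : ((-(n : ℤ) - 1 : ℤ) : ℝ) = (-(n : ℝ)) - 1 := by push_cast; ring
    rw [hcast]
    constructor
    · linear_combination -Real.cos t * e1 + Real.cos t * F1
        + (Real.cos t - 1) * e2 - (Real.cos t - 1) * F2
    · linear_combination (Real.cos t + 1) * e1 - (Real.cos t + 1) * F1
        - Real.cos t * e2 + Real.cos t * F2
end

section
/- Define v : ℤ → ℝ[X]² by v₀ = (0, 0) and v_{n+1} = ( X·v_n¹ + (X−1)·v_n² + 1, (X+1)·v_n¹ + X·v_n² + 1 ) for all n ∈ ℤ. For j, k ∈ ℤ set γ_j = v_{j+1} + v_j − v₁ − v₀ and σ_k = v_{k+1} − v_k (elements of ℝ[X]²). Then for all j, k ∈ ℤ: (1/(2π)) · ∫_{t=0}^{π} ( γ_j(cos t) ∧ σ_k(cos t) ) · (1 − cos t) dt = δ_{j,k} − δ_{0,k}, where γ_j(cos t) and σ_k(cos t) denote the vectors in ℝ² obtained by evaluating the coordinate polynomials at X = cos t, and δ_{a,b} equals 1 if a = b and 0 otherwise. -/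
open Polynomial Real

/-- The wedge product of two vectors in `ℝ²`: `u ∧ w = u₁w₂ − u₂w₁`. -/
def wedge (u w : ℝ × ℝ) : ℝ := u.1 * w.2 - u.2 * w.1

/-- Evaluation of a pair of polynomials at a real number, giving a vector in `ℝ²`. -/
def evalPair (p : Polynomial ℝ × Polynomial ℝ) (c : ℝ) : ℝ × ℝ :=
  (p.1.eval c, p.2.eval c)

lemma key10 (v : ℤ → Polynomial ℝ × Polynomial ℝ)
    (h0 : v 0 = (0, 0))
    (hrec : ∀ n : ℤ, v (n + 1) =
      (X * (v n).1 + (X - 1) * (v n).2 + 1, (X + 1) * (v n).1 + X * (v n).2 + 1)) :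
    ∀ (n : ℤ) (t : ℝ), Real.sin t ≠ 0 →
      (v n).1.eval (Real.cos t) = Real.sin (n * t) / Real.sin t ∧
      (v n).2.eval (Real.cos t) = (1 - Real.cos (n * t)) / (1 - Real.cos t) := by
  intro n
  induction n using Int.induction_on with
  | zero => intro t ht; simp [h0]
  | succ n ih =>
    intro t ht
    obtain ⟨h1, h2⟩ := ih t ht
    have hc : (1:ℝ) - Real.cos t ≠ 0 := by
      intro h
      apply ht
      have hc1 : Real.cos t = 1 := by linarith
      nlinarith [Real.sin_sq_add_cos_sq t, sq_nonneg (Real.sin t)]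
    have e1 : (v ((n:ℤ) + 1)).1.eval (Real.cos t) =
        Real.cos t * (v (n:ℤ)).1.eval (Real.cos t)
          + (Real.cos t - 1) * (v (n:ℤ)).2.eval (Real.cos t) + 1 := by
      rw [hrec (n:ℤ)]; simp
    have e2 : (v ((n:ℤ) + 1)).2.eval (Real.cos t) =
        (Real.cos t + 1) * (v (n:ℤ)).1.eval (Real.cos t)
          + Real.cos t * (v (n:ℤ)).2.eval (Real.cos t) + 1 := by
      rw [hrec (n:ℤ)]; simp
    have hsplit : ((((n:ℤ)+1 : ℤ)) : ℝ) * t = (n:ℝ) * t + t := by push_cast; ring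
    have h1' : Real.sin ((n:ℝ) * t) = (v (n:ℤ)).1.eval (Real.cos t) * Real.sin t :=
      (div_eq_iff ht).mp h1.symm
    have h2' : 1 - Real.cos ((n:ℝ) * t) = (v (n:ℤ)).2.eval (Real.cos t) * (1 - Real.cos t) :=
      (div_eq_iff hc).mp h2.symm
    constructor
    · rw [e1, hsplit, Real.sin_add, eq_div_iff ht]
      linear_combination (-Real.cos t) * h1' + Real.sin t * h2'
    · rw [e2, hsplit, Real.cos_add, eq_div_iff hc]
      linear_combination (-Real.sin t) * h1' - Real.cos t * h2'
        - (v (n:ℤ)).1.eval (Real.cos t) * (Real.sin_sq_add_cos_sq t)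
  | pred n ih =>
    intro t ht
    obtain ⟨h1, h2⟩ := ih t ht
    push_cast at h1 h2
    have hc : (1:ℝ) - Real.cos t ≠ 0 := by
      intro h
      apply ht
      have hc1 : Real.cos t = 1 := by linarith
      nlinarith [Real.sin_sq_add_cos_sq t, sq_nonneg (Real.sin t)]
    have hr : v (-(n:ℤ)) =
        (X * (v (-(n:ℤ) - 1)).1 + (X - 1) * (v (-(n:ℤ) - 1)).2 + 1,
         (X + 1) * (v (-(n:ℤ) - 1)).1 + X * (v (-(n:ℤ) - 1)).2 + 1) := by
      have := hrec (-(n:ℤ) - 1)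
      rwa [show (-(n:ℤ) - 1) + 1 = -(n:ℤ) by ring] at this
    set a := (v (-(n:ℤ) - 1)).1.eval (Real.cos t) with ha
    set b := (v (-(n:ℤ) - 1)).2.eval (Real.cos t) with hb
    have E1 : Real.sin ((-(n:ℝ)) * t) / Real.sin t =
        Real.cos t * a + (Real.cos t - 1) * b + 1 := by
      rw [← h1, hr]; simp [ha, hb]
    have E2 : (1 - Real.cos ((-(n:ℝ)) * t)) / (1 - Real.cos t) =
        (Real.cos t + 1) * a + Real.cos t * b + 1 := by
      rw [← h2, hr]; simp [ha, hb]
    rw [div_eq_iff ht] at E1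
    rw [div_eq_iff hc] at E2
    have hsplit : ((((-(n:ℤ))-1 : ℤ)) : ℝ) * t = (-(n:ℝ)) * t - t := by push_cast; ring
    constructor
    · rw [hsplit, Real.sin_sub, eq_div_iff ht]
      linear_combination (-Real.cos t) * E1 - Real.sin t * E2
    · rw [hsplit, Real.cos_sub, eq_div_iff hc]
      linear_combination Real.sin t * E1 - Real.cos t * E2 +
        (Real.cos t * a + (Real.cos t - 1) * b + 1) * (Real.sin_sq_add_cos_sq t)


lemma intcos10 (m : ℤ) : (∫ t in (0:ℝ)..π, Real.cos ((m:ℝ) * t)) =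
    if m = 0 then π else 0 := by
  by_cases hm : m = 0
  · simp [hm]
  · have hm' : (m:ℝ) ≠ 0 := Int.cast_ne_zero.mpr hm
    rw [intervalIntegral.integral_comp_mul_left Real.cos hm']
    simp [integral_cos, Real.sin_int_mul_pi, hm]

lemma point10 (v : ℤ → Polynomial ℝ × Polynomial ℝ)
    (h0 : v 0 = (0, 0))
    (hrec : ∀ n : ℤ, v (n + 1) =
      (X * (v n).1 + (X - 1) * (v n).2 + 1, (X + 1) * (v n).1 + X * (v n).2 + 1))
    (j k : ℤ) (t : ℝ) (ht : Real.sin t ≠ 0) :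
    wedge (evalPair (v (j + 1) + v j - v 1 - v 0) (Real.cos t))
        (evalPair (v (k + 1) - v k) (Real.cos t)) * (1 - Real.cos t) =
      2 * (Real.cos ((k:ℝ) * t - (j:ℝ) * t) - Real.cos ((k:ℝ) * t)) := by
  have hc : (1:ℝ) - Real.cos t ≠ 0 := by
    intro h
    apply ht
    have hc1 : Real.cos t = 1 := by linarith
    nlinarith [Real.sin_sq_add_cos_sq t, sq_nonneg (Real.sin t)]
  obtain ⟨aj1, bj1⟩ := key10 v h0 hrec (j + 1) t ht
  obtain ⟨aj, bj⟩ := key10 v h0 hrec j t ht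
  obtain ⟨ak1, bk1⟩ := key10 v h0 hrec (k + 1) t ht
  obtain ⟨ak, bk⟩ := key10 v h0 hrec k t ht
  obtain ⟨a1, b1⟩ := key10 v h0 hrec 1 t ht
  obtain ⟨a0, b0⟩ := key10 v h0 hrec 0 t ht
  push_cast at aj1 bj1 ak1 bk1 a1 b1 a0 b0
  simp only [one_mul, zero_mul, Real.sin_zero, Real.cos_zero] at a1 b1 a0 b0
  simp only [wedge, evalPair, Prod.fst_add, Prod.snd_add, Prod.fst_sub, Prod.snd_sub,
    eval_add, eval_sub]
  rw [aj1, bj1, aj, bj, ak1, bk1, ak, bk, a1, b1, a0, b0]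
  rw [show ((j:ℝ) + 1) * t = (j:ℝ) * t + t by ring,
    show ((k:ℝ) + 1) * t = (k:ℝ) * t + t by ring,
    Real.sin_add, Real.sin_add, Real.cos_add, Real.cos_add, Real.cos_sub]
  have key : (Real.sin ((j:ℝ)*t) * Real.cos t + Real.cos ((j:ℝ)*t) * Real.sin t
        + Real.sin ((j:ℝ)*t) - Real.sin t) *
      (Real.cos ((k:ℝ)*t) - Real.cos ((k:ℝ)*t) * Real.cos t
        + Real.sin ((k:ℝ)*t) * Real.sin t)
    - (1 + Real.cos t - Real.cos ((j:ℝ)*t) * Real.cos t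
        + Real.sin ((j:ℝ)*t) * Real.sin t - Real.cos ((j:ℝ)*t)) *
      (Real.sin ((k:ℝ)*t) * Real.cos t + Real.cos ((k:ℝ)*t) * Real.sin t
        - Real.sin ((k:ℝ)*t))
    = 2 * (Real.cos ((k:ℝ)*t) * Real.cos ((j:ℝ)*t)
        + Real.sin ((k:ℝ)*t) * Real.sin ((j:ℝ)*t) - Real.cos ((k:ℝ)*t)) * Real.sin t := by
    linear_combination ((Real.cos ((j:ℝ)*t) - 1) * Real.sin ((k:ℝ)*t)
      - Real.sin ((j:ℝ)*t) * Real.cos ((k:ℝ)*t)) * Real.sin_sq_add_cos_sq t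
  field_simp
  rw [mul_comm t (k:ℝ)]
  linear_combination key

theorem stmt10 (v : ℤ → Polynomial ℝ × Polynomial ℝ)
    (h0 : v 0 = (0, 0))
    (hrec : ∀ n : ℤ, v (n + 1) =
      (X * (v n).1 + (X - 1) * (v n).2 + 1, (X + 1) * (v n).1 + X * (v n).2 + 1)) :
    ∀ j k : ℤ,
      (1 / (2 * π)) *
          ∫ t in (0 : ℝ)..π,
            wedge (evalPair (v (j + 1) + v j - v 1 - v 0) (Real.cos t))
                (evalPair (v (k + 1) - v k) (Real.cos t)) * (1 - Real.cos t) =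
        (if j = k then (1 : ℝ) else 0) - (if k = 0 then (1 : ℝ) else 0) := by
  intro j k
  have hae : ∀ᵐ t : ℝ, t ∈ Set.uIoc (0:ℝ) π →
      wedge (evalPair (v (j + 1) + v j - v 1 - v 0) (Real.cos t))
        (evalPair (v (k + 1) - v k) (Real.cos t)) * (1 - Real.cos t) =
      2 * (Real.cos ((k:ℝ) * t - (j:ℝ) * t) - Real.cos ((k:ℝ) * t)) := by
    have hπ : ∀ᵐ t : ℝ, t ≠ π := by
      have : MeasureTheory.volume ({π} : Set ℝ) = 0 := MeasureTheory.measure_singleton π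
      rw [MeasureTheory.ae_iff]
      simp [Set.setOf_eq_eq_singleton']
    filter_upwards [hπ] with t htne hts
    rw [Set.uIoc_of_le Real.pi_pos.le] at hts
    have hlt : t < π := lt_of_le_of_ne hts.2 htne
    have hsin : Real.sin t ≠ 0 := ne_of_gt (Real.sin_pos_of_pos_of_lt_pi hts.1 hlt)
    exact point10 v h0 hrec j k t hsin
  rw [intervalIntegral.integral_congr_ae hae]
  have hcont1 : Continuous fun t : ℝ => Real.cos ((k:ℝ) * t - (j:ℝ) * t) := by fun_prop
  have hcont2 : Continuous fun t : ℝ => Real.cos ((k:ℝ) * t) := by fun_prop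
  have hI : (∫ t in (0:ℝ)..π, 2 * (Real.cos ((k:ℝ) * t - (j:ℝ) * t) - Real.cos ((k:ℝ) * t)))
      = 2 * ((if k - j = 0 then π else 0) - (if k = 0 then π else 0)) := by
    rw [intervalIntegral.integral_const_mul,
      intervalIntegral.integral_sub (hcont1.intervalIntegrable 0 π)
        (hcont2.intervalIntegrable 0 π)]
    have h1 : (∫ t in (0:ℝ)..π, Real.cos ((k:ℝ) * t - (j:ℝ) * t))
        = if k - j = 0 then π else 0 := by
      rw [show (fun t : ℝ => Real.cos ((k:ℝ) * t - (j:ℝ) * t))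
          = fun t : ℝ => Real.cos (((k - j : ℤ) : ℝ) * t) by
        funext t; push_cast; ring_nf]
      exact intcos10 (k - j)
    have h2 : (∫ t in (0:ℝ)..π, Real.cos ((k:ℝ) * t)) = if k = 0 then π else 0 :=
      intcos10 k
    rw [h1, h2]
  rw [hI]
  rcases eq_or_ne j k with h | h <;> rcases eq_or_ne k 0 with h' | h'
  · have h1 : k - j = 0 := by omega
    simp [h, h', h1]
  · have h1 : k - j = 0 := by omega
    simp only [h, h', h1, if_true, if_false, if_neg h']
    field_simp
    simp
  · have h1 : k - j ≠ 0 := by omega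
    simp only [if_neg h, if_neg h1, if_pos h']
    field_simp
    ring
  · have h1 : k - j ≠ 0 := by omega
    simp [h, h', h1]
end

section
/- Let M : ℝ → Matrix(2,2,ℝ) be a word matrix family. Suppose there are ε > 0 and functions λu, λs : ℝ → ℝ and Pu, Ps : ℝ → Matrix(2,2,ℝ), all real-analytic on the interval I = (1−ε, 1+ε), such that for all c ∈ I: M(c) = λu(c)·Pu(c) + λs(c)·Ps(c), Pu(c) + Ps(c) = 1, Pu(c)·Pu(c) = Pu(c), Ps(c)·Ps(c) = Ps(c), Pu(c)·Ps(c) = 0, and |λs(c)| < 1 < |λu(c)|; suppose moreover λu′(1) ≠ 0. Then for any two nonzero V, W ∈ ℝ[X]², the real-analytic function c ↦ (Pu(c)·V(c)) ∧ W(c) is not identically zero on I: there exists c ∈ I with (Pu(c)·V(c)) ∧ W(c) ≠ 0. -/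
open Polynomial Matrix

/-- The generator `A(c) = [[-1,0],[0,1]]`. -/
def Amat (_c : ℝ) : Matrix (Fin 2) (Fin 2) ℝ := !![-1, 0; 0, 1]

/-- The generator `B(c) = [[-1,2],[0,1]]`. -/
def Bmat (_c : ℝ) : Matrix (Fin 2) (Fin 2) ℝ := !![-1, 2; 0, 1]

/-- The generator `C(c) = [[-c,c-1],[-c-1,c]]`. -/
def Cmat (c : ℝ) : Matrix (Fin 2) (Fin 2) ℝ := !![-c, c - 1; -c - 1, c]

/-- The generator `J = [[-1,0],[0,-1]]`. -/
def Jmat (_c : ℝ) : Matrix (Fin 2) (Fin 2) ℝ := !![-1, 0; 0, -1]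

/-- A word matrix family: a product of a fixed finite word in the generators `A`, `B`, `C`, `J`. -/
def IsWordFamily (M : ℝ → Matrix (Fin 2) (Fin 2) ℝ) : Prop :=
  ∃ L : List (ℝ → Matrix (Fin 2) (Fin 2) ℝ),
    (∀ g ∈ L, g = Amat ∨ g = Bmat ∨ g = Cmat ∨ g = Jmat) ∧
    ∀ c, M c = (L.map (fun g => g c)).prod

/-- The wedge product of two vectors in `ℝ²`: `u ∧ w = u₁w₂ − u₂w₁`. -/
def wedge2 (u w : Fin 2 → ℝ) : ℝ := u 0 * w 1 - u 1 * w 0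

/-- Evaluation of a pair of polynomials at a real number, giving a vector in `ℝ²`. -/
noncomputable def evalVec (p : Polynomial ℝ × Polynomial ℝ) (c : ℝ) : Fin 2 → ℝ :=
  ![p.1.eval c, p.2.eval c]

lemma wedge2_smul_add (a b : ℝ) (u v w : Fin 2 → ℝ) :
    wedge2 (a • u + b • v) w = a * wedge2 u w + b * wedge2 v w := by
  simp [wedge2]; ring

lemma wedge2_sub_left (u v w : Fin 2 → ℝ) :
    wedge2 (u - v) w = wedge2 u w - wedge2 v w := by
  simp [wedge2]; ring

lemma vec_ne_cases {w : Fin 2 → ℝ} (hw : w ≠ 0) : w 0 ≠ 0 ∨ w 1 ≠ 0 := by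
  by_contra h
  push_neg at h
  exact hw (funext fun i => by fin_cases i <;> simp [h.1, h.2])

lemma wedge2_triple {u v w : Fin 2 → ℝ} (hw : w ≠ 0)
    (h1 : wedge2 u w = 0) (h2 : wedge2 v w = 0) : wedge2 u v = 0 := by
  simp only [wedge2] at h1 h2 ⊢
  rcases vec_ne_cases hw with h | h
  · apply mul_left_cancel₀ h
    rw [mul_zero]
    linear_combination (v 0) * h1 - (u 0) * h2
  · apply mul_left_cancel₀ h
    rw [mul_zero]
    linear_combination (v 1) * h1 - (u 1) * h2

lemma wedge2_eq_smul {u v : Fin 2 → ℝ} (hv : v ≠ 0) (h : wedge2 u v = 0) :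
    ∃ α : ℝ, u = α • v := by
  simp only [wedge2] at h
  rcases vec_ne_cases hv with hv0 | hv0
  · refine ⟨u 0 / v 0, funext fun j => ?_⟩
    fin_cases j
    · simp [div_mul_cancel₀, hv0]
    · show u 1 = u 0 / v 0 * v 1
      field_simp
      linear_combination -h
  · refine ⟨u 1 / v 1, funext fun j => ?_⟩
    fin_cases j
    · show u 0 = u 1 / v 1 * v 0
      field_simp
      linear_combination h
    · simp [div_mul_cancel₀, hv0]

lemma mulVec_eval (N : Matrix (Fin 2) (Fin 2) (Polynomial ℝ)) (c : ℝ)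
    (V : Polynomial ℝ × Polynomial ℝ) :
    (N.map (fun p => p.eval c)) *ᵥ evalVec V c
      = evalVec (N 0 0 * V.1 + N 0 1 * V.2, N 1 0 * V.1 + N 1 1 * V.2) c := by
  funext i
  fin_cases i <;>
    simp [Matrix.mulVec, dotProduct, Fin.sum_univ_two, evalVec, Matrix.map_apply]

lemma wedge2_eval (U W : Polynomial ℝ × Polynomial ℝ) (c : ℝ) :
    wedge2 (evalVec U c) (evalVec W c) = (U.1 * W.2 - U.2 * W.1).eval c := by
  simp [wedge2, evalVec]

lemma map_eval_mul (A B : Matrix (Fin 2) (Fin 2) (Polynomial ℝ)) (c : ℝ) :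
    (A * B).map (fun p => p.eval c)
      = A.map (fun p => p.eval c) * B.map (fun p => p.eval c) := by
  ext i j
  simp [Matrix.map_apply, Matrix.mul_apply, Fin.sum_univ_two]

lemma det_map_eval (A : Matrix (Fin 2) (Fin 2) (Polynomial ℝ)) (c : ℝ) :
    (A.map (fun p => p.eval c)).det = A.det.eval c := by
  simp [Matrix.det_fin_two, Matrix.map_apply]

lemma word_poly {M : ℝ → Matrix (Fin 2) (Fin 2) ℝ} (hM : IsWordFamily M) :
    ∃ N : Matrix (Fin 2) (Fin 2) (Polynomial ℝ),
      (∀ c, M c = N.map (fun p => p.eval c)) ∧ (N.det = 1 ∨ N.det = -1) := by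
  obtain ⟨L, hL, hMc⟩ := hM
  suffices h : ∃ N : Matrix (Fin 2) (Fin 2) (Polynomial ℝ),
      (∀ c, (L.map (fun g => g c)).prod = N.map (fun p => p.eval c)) ∧
      (N.det = 1 ∨ N.det = -1) by
    obtain ⟨N, h1, h2⟩ := h
    exact ⟨N, fun c => (hMc c).trans (h1 c), h2⟩
  clear hMc
  induction L with
  | nil =>
    refine ⟨1, fun c => ?_, Or.inl Matrix.det_one⟩
    ext i j
    simp [Matrix.map_apply, Matrix.one_apply]
    split <;> simp
  | cons g L ih =>
    obtain ⟨N, hN, hNdet⟩ := ih (fun g hg => hL g (List.mem_cons_of_mem _ hg))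
    have hg := hL g (List.mem_cons_self)
    obtain ⟨Ng, hNg, hNgdet⟩ : ∃ Ng : Matrix (Fin 2) (Fin 2) (Polynomial ℝ),
        (∀ c, g c = Ng.map (fun p => p.eval c)) ∧ (Ng.det = 1 ∨ Ng.det = -1) := by
      rcases hg with h | h | h | h <;> subst h
      · refine ⟨!![-1, 0; 0, 1], fun c => ?_, Or.inr (by rw [Matrix.det_fin_two_of]; ring)⟩
        ext i j; fin_cases i <;> fin_cases j <;> simp [Amat, Matrix.map_apply]
      · refine ⟨!![-1, 2; 0, 1], fun c => ?_, Or.inr (by rw [Matrix.det_fin_two_of]; ring)⟩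
        ext i j; fin_cases i <;> fin_cases j <;> simp [Bmat, Matrix.map_apply]
      · refine ⟨!![-X, X - 1; -X - 1, X], fun c => ?_,
          Or.inr (by rw [Matrix.det_fin_two_of]; ring)⟩
        ext i j; fin_cases i <;> fin_cases j <;> simp [Cmat, Matrix.map_apply]
      · refine ⟨!![-1, 0; 0, -1], fun c => ?_, Or.inl (by rw [Matrix.det_fin_two_of]; ring)⟩
        ext i j; fin_cases i <;> fin_cases j <;> simp [Jmat, Matrix.map_apply]
    refine ⟨Ng * N, fun c => ?_, ?_⟩
    · rw [List.map_cons, List.prod_cons, hNg c, hN c, map_eval_mul]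
    · rw [Matrix.det_mul]
      rcases hNgdet with h1 | h1 <;> rcases hNdet with h2 | h2 <;> rw [h1, h2] <;>
        [left; right; right; left] <;> ring

lemma spectral (P Q : Matrix (Fin 2) (Fin 2) ℝ) (a b d : ℝ)
    (hPQ1 : P + Q = 1) (hPP : P * P = P) (hb : |b| < 1) (ha : 1 < |a|)
    (hd : d = 1 ∨ d = -1) (hdet : (a • P + b • Q).det = d) :
    (a • P + b • Q).trace = a + b ∧ d = a * b := by
  have hQ : Q = 1 - P := eq_sub_of_add_eq' hPQ1
  subst hQ
  have hb2 : b ^ 2 < 1 := by nlinarith [abs_nonneg b, sq_abs b]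
  have ha2 : 1 < a ^ 2 := by nlinarith [abs_nonneg a, sq_abs a]
  have e : ∀ i j, (P * P) i j = P i j := fun i j => by rw [hPP]
  have h00 := e 0 0; have h01 := e 0 1; have h10 := e 1 0; have h11 := e 1 1
  simp only [Matrix.mul_apply, Fin.sum_univ_two] at h00 h01 h10 h11
  rw [Matrix.det_fin_two] at hdet
  simp only [Matrix.add_apply, Matrix.smul_apply, Matrix.sub_apply, Matrix.one_apply,
    smul_eq_mul] at hdet
  norm_num at hdet
  rw [Matrix.trace_fin_two]
  simp only [Matrix.add_apply, Matrix.smul_apply, Matrix.sub_apply, Matrix.one_apply,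
    smul_eq_mul]
  norm_num
  have hq : P 0 1 * (P 0 0 + P 1 1 - 1) = 0 := by linear_combination h01
  have hr : P 1 0 * (P 0 0 + P 1 1 - 1) = 0 := by linear_combination h10
  by_cases hps : P 0 0 + P 1 1 = 1
  · have hqr : P 0 1 * P 1 0 = P 0 0 * P 1 1 := by
      linear_combination h00 - P 0 0 * hps
    constructor
    · linear_combination (a - b) * hps
    · linear_combination -hdet + b * (a - b) * hps - (a - b) ^ 2 * hqr
  · exfalso
    have hq0 : P 0 1 = 0 := by
      rcases mul_eq_zero.mp hq with h | h
      · exact h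
      · exact absurd (by linarith : P 0 0 + P 1 1 = 1) hps
    have hr0 : P 1 0 = 0 := by
      rcases mul_eq_zero.mp hr with h | h
      · exact h
      · exact absurd (by linarith : P 0 0 + P 1 1 = 1) hps
    have hpp : P 0 0 * (P 0 0 - 1) = 0 := by linear_combination h00 - P 1 0 * hq0
    have hss : P 1 1 * (P 1 1 - 1) = 0 := by linear_combination h11 - P 0 1 * hr0
    rcases mul_eq_zero.mp hpp with hp | hp <;> rcases mul_eq_zero.mp hss with hs | hs
    · rw [hp, hq0, hr0, hs] at hdet
      norm_num at hdet
      rcases hd with rfl | rfl <;> nlinarith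
    · exact hps (by rw [hp]; linarith [sub_eq_zero.mp hs])
    · exact hps (by rw [sub_eq_zero.mp hp]; linarith [hs]; )
    · have hp1 := sub_eq_zero.mp hp
      have hs1 := sub_eq_zero.mp hs
      rw [hp1, hq0, hr0, hs1] at hdet
      norm_num at hdet
      rcases hd with rfl | rfl <;> nlinarith

lemma key_poly (T p q : Polynomial ℝ) (d : ℝ) (hd : d ≠ 0) (hq : q ≠ 0)
    (hid : p ^ 2 - T * p * q + C d * q ^ 2 = 0) : ∃ t0 : ℝ, T = C t0 := by
  set g := GCDMonoid.gcd p q with hg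
  have hg0 : g ≠ 0 := gcd_ne_zero_of_right hq
  set a := p / g with ha
  set b := q / g with hb
  have hco : IsCoprime a b := isCoprime_div_gcd_div_gcd hq
  have hpa : g * a = p := EuclideanDomain.mul_div_cancel' hg0 (gcd_dvd_left p q)
  have hqb : g * b = q := EuclideanDomain.mul_div_cancel' hg0 (gcd_dvd_right p q)
  have hid2 : a ^ 2 - T * a * b + C d * b ^ 2 = 0 := by
    have h1 : g ^ 2 * (a ^ 2 - T * a * b + C d * b ^ 2) = 0 := by
      rw [← hid]; rw [← hpa, ← hqb]; ring
    rcases mul_eq_zero.mp h1 with h | h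
    · exact absurd h (pow_ne_zero 2 hg0)
    · exact h
  have hdvd : b ∣ a * a := ⟨T * a - C d * b, by linear_combination hid2⟩
  have hbu : IsUnit b := (hco.symm.mul_right hco.symm).isUnit_of_dvd hdvd
  obtain ⟨β, hβu, hβ⟩ := Polynomial.isUnit_iff.mp hbu
  have hβ0 : β ≠ 0 := hβu.ne_zero
  have hprod : a * (C β * T - a) = C (d * β ^ 2) := by
    rw [C_mul, C_pow]
    linear_combination -hid2 + (T * a - C d * (C β + b)) * hβ
  have hrhs : (C (d * β ^ 2) : Polynomial ℝ) ≠ 0 := by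
    simp only [ne_eq, C_eq_zero]
    positivity
  have ha0 : a ≠ 0 := by
    intro h; rw [h, zero_mul] at hprod; exact hrhs hprod.symm
  have ha20 : C β * T - a ≠ 0 := by
    intro h; rw [h, mul_zero] at hprod; exact hrhs hprod.symm
  have hdeg : a.natDegree + (C β * T - a).natDegree = 0 := by
    rw [← Polynomial.natDegree_mul ha0 ha20, hprod, Polynomial.natDegree_C]
  obtain ⟨a0, ha0'⟩ := Polynomial.natDegree_eq_zero.mp (Nat.eq_zero_of_add_eq_zero_right hdeg)
  obtain ⟨k, hk⟩ := Polynomial.natDegree_eq_zero.mp (Nat.eq_zero_of_add_eq_zero_left hdeg)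
  refine ⟨β⁻¹ * (k + a0), ?_⟩
  have hCβ : (C β : Polynomial ℝ) ≠ 0 := by simpa using hβ0
  apply mul_left_cancel₀ hCβ
  have h2 : C β * T = C (k + a0) := by
    rw [C_add]
    linear_combination -hk - ha0'
  rw [h2, ← C_mul]
  congr 1
  field_simp

lemma caseB_aux (T pp qq : Polynomial ℝ) (d : ℝ) (hd : d ≠ 0) (hqq : qq ≠ 0)
    (S : Set ℝ) (hS : S.Infinite)
    (h : ∀ c ∈ S, ∃ μ : ℝ, μ ^ 2 - T.eval c * μ + d = 0 ∧ pp.eval c = μ * qq.eval c) :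
    ∃ t0 : ℝ, T = C t0 := by
  apply key_poly T pp qq d hd hqq
  apply Polynomial.eq_zero_of_infinite_isRoot
  apply hS.mono
  intro c hc
  obtain ⟨μ, hμq, hμ⟩ := h c hc
  simp only [Set.mem_setOf_eq, Polynomial.IsRoot, eval_add, eval_sub, eval_mul, eval_pow, eval_C]
  linear_combination (pp.eval c + μ * qq.eval c - T.eval c * qq.eval c) * hμ
    + (qq.eval c) ^ 2 * hμq

lemma eigen_aux (Pu Ps Mc : Matrix (Fin 2) (Fin 2) ℝ) (a b : ℝ) (v : Fin 2 → ℝ)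
    (hv : v ≠ 0) (hMc : Mc = a • Pu + b • Ps) (hPQ1 : Pu + Ps = 1) (hPP : Pu * Pu = Pu)
    (hperp : wedge2 (Pu *ᵥ v) v = 0) :
    ∃ μ : ℝ, (μ = a ∨ μ = b) ∧ Mc *ᵥ v = μ • v := by
  obtain ⟨α, hα⟩ := wedge2_eq_smul hv hperp
  have hαα : α * α = α := by
    have h1 : Pu *ᵥ (Pu *ᵥ v) = Pu *ᵥ v := by rw [Matrix.mulVec_mulVec, hPP]
    rw [hα, Matrix.mulVec_smul, hα, smul_smul] at h1
    have h2 : (α * α - α) • v = 0 := by rw [sub_smul, h1, sub_self]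
    rcases smul_eq_zero.mp h2 with h | h
    · linarith [sub_eq_zero.mp (by linarith [h] : α * α - α = 0)]
    · exact absurd h hv
  have hPs : Ps *ᵥ v = (1 - α) • v := by
    have h3 : (Pu + Ps) *ᵥ v = v := by rw [hPQ1, Matrix.one_mulVec]
    rw [Matrix.add_mulVec, hα] at h3
    rw [sub_smul, one_smul]
    exact eq_sub_of_add_eq' h3
  refine ⟨a * α + b * (1 - α), ?_, ?_⟩
  · rcases mul_eq_zero.mp (show α * (α - 1) = 0 by linear_combination hαα) with h | h
    · right; rw [h]; ring
    · left; rw [sub_eq_zero.mp h]; ring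
  · rw [hMc, Matrix.add_mulVec, Matrix.smul_mulVec, Matrix.smul_mulVec, hα, hPs,
      smul_smul, smul_smul, ← add_smul]

theorem stmt14 (M : ℝ → Matrix (Fin 2) (Fin 2) ℝ) (hM : IsWordFamily M)
    (ε : ℝ) (hε : 0 < ε)
    (lamu lams : ℝ → ℝ) (Pu Ps : ℝ → Matrix (Fin 2) (Fin 2) ℝ)
    (hlamu : AnalyticOnNhd ℝ lamu (Set.Ioo (1 - ε) (1 + ε)))
    (hlams : AnalyticOnNhd ℝ lams (Set.Ioo (1 - ε) (1 + ε)))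
    (hPu : ∀ i j : Fin 2, AnalyticOnNhd ℝ (fun c => Pu c i j) (Set.Ioo (1 - ε) (1 + ε)))
    (hPs : ∀ i j : Fin 2, AnalyticOnNhd ℝ (fun c => Ps c i j) (Set.Ioo (1 - ε) (1 + ε)))
    (hdiag : ∀ c ∈ Set.Ioo (1 - ε) (1 + ε),
      M c = lamu c • Pu c + lams c • Ps c ∧
      Pu c + Ps c = 1 ∧ Pu c * Pu c = Pu c ∧ Ps c * Ps c = Ps c ∧ Pu c * Ps c = 0 ∧
      |lams c| < 1 ∧ 1 < |lamu c|)
    (hderiv : deriv lamu 1 ≠ 0)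
    (V W : Polynomial ℝ × Polynomial ℝ) (hV : V ≠ 0) (hW : W ≠ 0) :
    ∃ c ∈ Set.Ioo (1 - ε) (1 + ε),
      wedge2 (Pu c *ᵥ evalVec V c) (evalVec W c) ≠ 0 := by
  by_contra hcon
  push_neg at hcon
  set I : Set ℝ := Set.Ioo (1 - ε) (1 + ε) with hIdef
  have h1I : (1 : ℝ) ∈ I := ⟨by linarith, by linarith⟩
  have hIopen : IsOpen I := isOpen_Ioo
  have hIinf : I.Infinite := Set.Ioo_infinite (by linarith)
  obtain ⟨N, hN, hNdet⟩ := word_poly hM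
  obtain ⟨d, hd1, hdet⟩ : ∃ d : ℝ, (d = 1 ∨ d = -1) ∧ ∀ c, (M c).det = d := by
    rcases hNdet with h | h
    · exact ⟨1, Or.inl rfl, fun c => by rw [hN c, det_map_eval, h, Polynomial.eval_one]⟩
    · refine ⟨-1, Or.inr rfl, fun c => by rw [hN c, det_map_eval, h]; simp⟩
  have hdne : d ≠ 0 := by rcases hd1 with rfl | rfl <;> norm_num
  set T : Polynomial ℝ := N 0 0 + N 1 1 with hTdef
  have htr : ∀ c, (M c).trace = T.eval c := by
    intro c
    rw [hN c, Matrix.trace_fin_two]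
    simp [Matrix.map_apply, hTdef]
  have hsp : ∀ c ∈ I, lamu c + lams c = T.eval c ∧ lamu c * lams c = d := by
    intro c hc
    obtain ⟨hMc, hPQ1, hPP, _hQQ, _hPQ, hb, ha⟩ := hdiag c hc
    have hds : (lamu c • Pu c + lams c • Ps c).det = d := by rw [← hMc]; exact hdet c
    have hsp2 := spectral (Pu c) (Ps c) (lamu c) (lams c) d hPQ1 hPP hb ha hd1 hds
    constructor
    · rw [← htr c, hMc, hsp2.1]
    · exact hsp2.2.symm
  have hquadu : ∀ c ∈ I, lamu c ^ 2 - T.eval c * lamu c + d = 0 := by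
    intro c hc
    obtain ⟨h1, h2⟩ := hsp c hc
    linear_combination (lamu c) * h1 - h2
  have hquads : ∀ c ∈ I, lams c ^ 2 - T.eval c * lams c + d = 0 := by
    intro c hc
    obtain ⟨h1, h2⟩ := hsp c hc
    linear_combination (lams c) * h1 - h2
  -- key step: T is constant
  have hTconst : ∃ t0 : ℝ, T = C t0 := by
    by_cases hq0 : V.1 * W.2 - V.2 * W.1 = 0
    · -- degenerate case : V parallel to W
      have hWne : W.1 ≠ 0 ∨ W.2 ≠ 0 := by
        by_contra h; push_neg at h; exact hW (Prod.ext_iff.mpr ⟨h.1, h.2⟩)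
      have hVne : V.1 ≠ 0 ∨ V.2 ≠ 0 := by
        by_contra h; push_neg at h; exact hV (Prod.ext_iff.mpr ⟨h.1, h.2⟩)
      obtain ⟨w, hw, hwimp⟩ : ∃ w : Polynomial ℝ, w ≠ 0 ∧
          ∀ c : ℝ, w.eval c ≠ 0 → evalVec W c ≠ 0 := by
        rcases hWne with h | h
        · exact ⟨W.1, h, fun c hc hz => hc (by simpa [evalVec] using congrFun hz 0)⟩
        · exact ⟨W.2, h, fun c hc hz => hc (by simpa [evalVec] using congrFun hz 1)⟩
      obtain ⟨v, hv, hvimp, pp, hpp⟩ : ∃ v : Polynomial ℝ, v ≠ 0 ∧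
          (∀ c : ℝ, v.eval c ≠ 0 → evalVec V c ≠ 0) ∧ ∃ pp : Polynomial ℝ,
          ∀ c : ℝ, ∀ μ : ℝ, M c *ᵥ evalVec V c = μ • evalVec V c →
            pp.eval c = μ * v.eval c := by
        rcases hVne with h | h
        · refine ⟨V.1, h, fun c hc hz => hc (by simpa [evalVec] using congrFun hz 0),
            N 0 0 * V.1 + N 0 1 * V.2, fun c μ hμ => ?_⟩
          rw [hN c, mulVec_eval] at hμ
          simpa [evalVec] using congrFun hμ 0
        · refine ⟨V.2, h, fun c hc hz => hc (by simpa [evalVec] using congrFun hz 1),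
            N 1 0 * V.1 + N 1 1 * V.2, fun c μ hμ => ?_⟩
          rw [hN c, mulVec_eval] at hμ
          simpa [evalVec] using congrFun hμ 1
      apply caseB_aux T pp v d hdne hv (I \ {x | (w * v).IsRoot x})
        (hIinf.diff (Polynomial.finite_setOf_isRoot (mul_ne_zero hw hv)))
      rintro c ⟨hcI, hcr⟩
      have hcr' : w.eval c ≠ 0 ∧ v.eval c ≠ 0 := by
        rw [Set.mem_setOf_eq, Polynomial.IsRoot, Polynomial.eval_mul] at hcr
        exact mul_ne_zero_iff.mp hcr
      have hWc : evalVec W c ≠ 0 := hwimp c hcr'.1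
      have hVc : evalVec V c ≠ 0 := hvimp c hcr'.2
      obtain ⟨hMc, hPQ1, hPP, _hQQ, _hPQ, _hb, _ha⟩ := hdiag c hcI
      have hVW : wedge2 (evalVec V c) (evalVec W c) = 0 := by
        rw [wedge2_eval, hq0, Polynomial.eval_zero]
      have hperp : wedge2 (Pu c *ᵥ evalVec V c) (evalVec V c) = 0 :=
        wedge2_triple hWc (hcon c hcI) hVW
      obtain ⟨μ, hμor, hμ⟩ := eigen_aux (Pu c) (Ps c) (M c) (lamu c) (lams c)
        (evalVec V c) hVc hMc hPQ1 hPP hperp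
      refine ⟨μ, ?_, hpp c μ hμ⟩
      rcases hμor with rfl | rfl
      · exact hquadu c hcI
      · exact hquads c hcI
    · -- main case : V not parallel to W
      set q0 : Polynomial ℝ := V.1 * W.2 - V.2 * W.1 with hq0def
      set p1 : Polynomial ℝ := (N 0 0 * V.1 + N 0 1 * V.2) * W.2
        - (N 1 0 * V.1 + N 1 1 * V.2) * W.1 with hp1def
      apply caseB_aux T p1 q0 d hdne hq0 I hIinf
      intro c hc
      refine ⟨lams c, hquads c hc, ?_⟩
      obtain ⟨hMc, hPQ1, _hPP, _hQQ, _hPQ, _hb, _ha⟩ := hdiag c hc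
      have hbridge : wedge2 (M c *ᵥ evalVec V c) (evalVec W c) = p1.eval c := by
        rw [hN c, mulVec_eval, wedge2_eval]
      have hdecomp : M c *ᵥ evalVec V c
          = lamu c • (Pu c *ᵥ evalVec V c) + lams c • (Ps c *ᵥ evalVec V c) := by
        rw [hMc, Matrix.add_mulVec, Matrix.smul_mulVec, Matrix.smul_mulVec]
      have hsum : Ps c *ᵥ evalVec V c = evalVec V c - Pu c *ᵥ evalVec V c := by
        have h3 : (Pu c + Ps c) *ᵥ evalVec V c = evalVec V c := by
          rw [hPQ1, Matrix.one_mulVec]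
        rw [Matrix.add_mulVec] at h3
        exact eq_sub_of_add_eq' h3
      have hu0 : wedge2 (Pu c *ᵥ evalVec V c) (evalVec W c) = 0 := hcon c hc
      have hVW : wedge2 (evalVec V c) (evalVec W c) = q0.eval c := wedge2_eval V W c
      rw [← hbridge, hdecomp, wedge2_smul_add, hu0, hsum, wedge2_sub_left, hu0, hVW]
      ring
  obtain ⟨t0, hT0⟩ := hTconst
  have hquad1 : ∀ c ∈ I, lamu c ^ 2 - t0 * lamu c + d = 0 := by
    intro c hc
    have h := hquadu c hc
    rwa [hT0, Polynomial.eval_C] at h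
  have hfac : ∀ c ∈ I, (lamu c - lamu 1) * (lamu c - (t0 - lamu 1)) = 0 := by
    intro c hc
    have h1 := hquad1 1 h1I
    have h2 := hquad1 c hc
    linear_combination h2 - h1
  have hev : lamu =ᶠ[nhds 1] fun _ => lamu 1 := by
    have hImem : I ∈ nhds (1 : ℝ) := hIopen.mem_nhds h1I
    by_cases hsep : t0 - lamu 1 = lamu 1
    · filter_upwards [hImem] with c hc
      have h := hfac c hc
      rw [hsep, mul_self_eq_zero] at h
      exact sub_eq_zero.mp h
    · have hδ : 0 < |lamu 1 - (t0 - lamu 1)| := by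
        rw [abs_pos, sub_ne_zero]
        exact fun h => hsep h.symm
      have hct : ContinuousAt lamu 1 := (hlamu 1 h1I).continuousAt
      have hev2 : ∀ᶠ c in nhds 1, |lamu c - lamu 1| < |lamu 1 - (t0 - lamu 1)| := by
        have h4 := Metric.tendsto_nhds.mp hct _ hδ
        filter_upwards [h4] with c hc
        simpa [Real.dist_eq] using hc
      filter_upwards [hImem, hev2] with c hc hlt
      rcases mul_eq_zero.mp (hfac c hc) with h | h
      · exact sub_eq_zero.mp h
      · exfalso
        rw [sub_eq_zero.mp h, abs_sub_comm] at hlt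
        exact lt_irrefl _ hlt
  exact hderiv (by rw [hev.deriv_eq, deriv_const])
end
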